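/- Assume P^t(0,0) > π(0) for every t ≥ 0 and P^t(0,0) is nonincreasing in t. Then: every row of Λ sums to 1; π = π̂₀ Λ; Λ P_abs = P̂ Λ; and Λ(0,0) = 1 while Λ(i,0) = 0 for all i ≥ 1. Consequently, for every integer t ≥ 0, (π P_abs^t)(0) = (π̂₀ P̂^t)(0); i.e., the hitting time of state 0 for the chain P started in stationarity π has the same distribution as the hitting time of state 0 for the chain (π̂₀, P̂). -/

import Mathlib

open Matrix

/-- The row vector `μ_i`. -/
noncomputable def muRow {n : ℕ} (P : Matrix (Fin (n + 1)) (Fin (n + 1)) ℝ)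
    (π : Fin (n + 1) → ℝ) (i : ℕ) : Fin (n + 1) → ℝ := fun j =>
  if j = 0 then 0
  else ((P ^ (i - 1)) 0 0 * π j - π 0 * (P ^ (i - 1)) 0 j) / ((P ^ (i - 1)) 0 0 - π 0)

/-- The scalar `q_i`. -/
noncomputable def qScal {n : ℕ} (P : Matrix (Fin (n + 1)) (Fin (n + 1)) ℝ)
    (π : Fin (n + 1) → ℝ) (i : ℕ) : ℝ :=
  ((P ^ (i - 1)) 0 0 - (P ^ i) 0 0) / ((P ^ (i - 1)) 0 0 - π 0)

/-- The initial distribution `π̂₀ = π(0) δ_0 + (1−π(0)) δ_1` of the dual chain on `ℕ`. -/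
noncomputable def pihat0 {n : ℕ} (π : Fin (n + 1) → ℝ) : ℕ → ℝ := fun i =>
  if i = 0 then π 0 else if i = 1 then 1 - π 0 else 0

/-- The dual transition kernel `P̂` on `ℕ`: `P̂(0,0) = 1` and, for `i ≥ 1`,
`P̂(i,0) = π(0) q_i`, `P̂(i,1) = (1−π(0)) q_i`, `P̂(i,i+1) = 1−q_i`, other entries 0. -/
noncomputable def PhatInf {n : ℕ} (P : Matrix (Fin (n + 1)) (Fin (n + 1)) ℝ)
    (π : Fin (n + 1) → ℝ) : ℕ → ℕ → ℝ := fun i j =>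
  if i = 0 then (if j = 0 then 1 else 0)
  else if j = 0 then π 0 * qScal P π i
  else if j = 1 then (1 - π 0) * qScal P π i
  else if j = i + 1 then 1 - qScal P π i
  else 0

/-- The distribution `π̂₀ P̂^t` of the dual chain at time `t`. -/
noncomputable def dualDist {n : ℕ} (P : Matrix (Fin (n + 1)) (Fin (n + 1)) ℝ)
    (π : Fin (n + 1) → ℝ) : ℕ → ℕ → ℝ
  | 0 => pihat0 π
  | (t + 1) => fun j => ∑' i : ℕ, dualDist P π t i * PhatInf P π i j

/-- The link `Λ` with rows indexed by `ℕ`: `Λ(0,:) = δ_0` and `Λ(i,:) = μ_i` for `i ≥ 1`. -/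
noncomputable def LambdaInf {n : ℕ} (P : Matrix (Fin (n + 1)) (Fin (n + 1)) ℝ)
    (π : Fin (n + 1) → ℝ) : ℕ → Fin (n + 1) → ℝ := fun i =>
  if i = 0 then (fun j => if j = 0 then 1 else 0) else muRow P π i

section
variable {n : ℕ} (P : Matrix (Fin (n + 1)) (Fin (n + 1)) ℝ) (π : Fin (n + 1) → ℝ)

lemma pow_row_sum (hP_row : ∀ i, ∑ j, P i j = 1) :
    ∀ (m : ℕ) (i : Fin (n+1)), ∑ j, (P ^ m) i j = 1 := by
  intro m
  induction m with
  | zero => intro i; simp [Matrix.one_apply]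
  | succ m ih =>
    intro i
    have h : ∀ j, (P ^ (m+1)) i j = ∑ k, (P ^ m) i k * P k j := by
      intro j; rw [pow_succ, Matrix.mul_apply]
    simp only [h]
    rw [Finset.sum_comm]
    calc ∑ k, ∑ j, (P ^ m) i k * P k j = ∑ k, (P ^ m) i k * ∑ j, P k j := by
          simp [Finset.mul_sum]
      _ = 1 := by simp [hP_row, ih]

lemma stat_apply (hπ_stat : π ᵥ* P = π) (j : Fin (n+1)) :
    ∑ k, π k * P k j = π j := by
  have := congrFun hπ_stat j
  simpa [Matrix.vecMul, dotProduct] using this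

lemma lam_full (i : ℕ) (hi : i ≠ 0) (hd : (P ^ (i-1)) 0 0 - π 0 ≠ 0) (j : Fin (n+1)) :
    LambdaInf P π i j
      = ((P ^ (i-1)) 0 0 * π j - π 0 * (P ^ (i-1)) 0 j) / ((P ^ (i-1)) 0 0 - π 0) := by
  simp only [LambdaInf, if_neg hi, muRow]
  by_cases hj : j = 0
  · subst hj
    rw [if_pos rfl]
    have h0 : (P ^ (i-1)) 0 0 * π 0 - π 0 * (P ^ (i-1)) 0 0 = 0 := by ring
    rw [h0, zero_div]
  · rw [if_neg hj]

lemma lam_zero_col (i : ℕ) (hi : 1 ≤ i) : LambdaInf P π i 0 = 0 := by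
  have hi' : i ≠ 0 := by omega
  simp [LambdaInf, if_neg hi', muRow]

/-- LHS of intertwining for rows `i = m+1`. -/
lemma lhs_compute (hπ_stat : π ᵥ* P = π) (m : ℕ) (hd : (P ^ m) 0 0 - π 0 ≠ 0)
    (j : Fin (n+1)) :
    ∑ k, LambdaInf P π (m+1) k * Matrix.updateRow P 0 (fun l => if l = 0 then 1 else 0) k j
      = ((P ^ m) 0 0 * π j - π 0 * (P ^ (m+1)) 0 j) / ((P ^ m) 0 0 - π 0) := by
  have hm : (m + 1) - 1 = m := by omega
  have key : ∀ k, LambdaInf P π (m+1) k *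
      Matrix.updateRow P 0 (fun l => if l = 0 then 1 else 0) k j
      = ((P ^ m) 0 0 * (π k * P k j) - π 0 * ((P ^ m) 0 k * P k j)) / ((P ^ m) 0 0 - π 0) := by
    intro k
    by_cases hk : k = 0
    · subst hk
      rw [lam_zero_col P π (m+1) (by omega), zero_mul]
      have h0 : (P ^ m) 0 0 * (π 0 * P 0 j) - π 0 * ((P ^ m) 0 0 * P 0 j) = 0 := by ring
      rw [h0, zero_div]
    · rw [Matrix.updateRow_ne hk, lam_full P π (m+1) (by omega) (by rwa [hm]) k, hm]
      rw [div_mul_eq_mul_div]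
      congr 1
      ring
  rw [Finset.sum_congr rfl (fun k _ => key k), ← Finset.sum_div]
  rw [Finset.sum_sub_distrib, ← Finset.mul_sum, ← Finset.mul_sum]
  rw [stat_apply P π hπ_stat j,
    show (∑ k, (P ^ m) 0 k * P k j) = (P ^ (m+1)) 0 j by rw [pow_succ, Matrix.mul_apply]]

lemma phat_supp (k l : ℕ) (hl : k + 2 ≤ l) : PhatInf P π k l = 0 := by
  have h0 : l ≠ 0 := by omega
  have h1 : l ≠ 1 := by omega
  have h2 : l ≠ k + 1 := by omega
  by_cases hk : k = 0 <;> simp [PhatInf, hk, h0, h1, h2]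

/-- RHS of intertwining for rows `i = m+1` as a three-term sum. -/
lemma rhs_fin (m : ℕ) (j : Fin (n+1)) :
    ∑' k : ℕ, PhatInf P π (m+1) k * LambdaInf P π k j
      = PhatInf P π (m+1) 0 * LambdaInf P π 0 j
        + PhatInf P π (m+1) 1 * LambdaInf P π 1 j
        + PhatInf P π (m+1) (m+2) * LambdaInf P π (m+2) j := by
  have h := tsum_eq_sum (L := SummationFilter.unconditional ℕ) (s := ({0, 1, m+2} : Finset ℕ))
    (f := fun k => PhatInf P π (m+1) k * LambdaInf P π k j) ?_
  · rw [h]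
    have h01 : (0:ℕ) ∉ ({1, m+2} : Finset ℕ) := by simp
    have h12 : (1:ℕ) ∉ ({m+2} : Finset ℕ) := by simp
    rw [Finset.sum_insert h01, Finset.sum_insert h12, Finset.sum_singleton, add_assoc]
  · intro k hk
    simp only [Finset.mem_insert, Finset.mem_singleton] at hk
    push_neg at hk
    have h0 : PhatInf P π (m+1) k = 0 := by
      simp [PhatInf, hk.1, hk.2.1, hk.2.2]
    show PhatInf P π (m+1) k * LambdaInf P π k j = 0
    rw [h0, zero_mul]

/-- The intertwining relation `Λ P_abs = P̂ Λ`. -/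
lemma intertwine (hπ_stat : π ᵥ* P = π) (hpos : ∀ t : ℕ, π 0 < (P ^ t) 0 0)
    (i : ℕ) (j : Fin (n+1)) :
    (∑ k, LambdaInf P π i k * Matrix.updateRow P 0 (fun l => if l = 0 then 1 else 0) k j)
      = ∑' k : ℕ, PhatInf P π i k * LambdaInf P π k j := by
  have hd : ∀ t : ℕ, (P ^ t) 0 0 - π 0 ≠ 0 := fun t => sub_ne_zero_of_ne (ne_of_gt (hpos t))
  have hp0 : (P ^ 0) 0 0 = 1 := by simp [Matrix.one_apply]
  have h1π : (1:ℝ) - π 0 ≠ 0 := by have := hd 0; rwa [hp0] at this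
  rcases Nat.eq_zero_or_pos i with hi | hi
  · subst hi
    have hl : ∑ k, LambdaInf P π 0 k *
        Matrix.updateRow P 0 (fun l => if l = 0 then 1 else 0) k j
        = (if j = 0 then (1:ℝ) else 0) := by
      rw [Finset.sum_eq_single 0]
      · simp [LambdaInf, Matrix.updateRow_self]
      · intro k _ hk
        have h0 : LambdaInf P π 0 k = 0 := by simp [LambdaInf, hk]
        rw [h0, zero_mul]
      · simp
    rw [hl]
    have h := tsum_eq_sum (L := SummationFilter.unconditional ℕ) (s := ({0} : Finset ℕ))
      (f := fun k => PhatInf P π 0 k * LambdaInf P π k j) ?_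
    · rw [h, Finset.sum_singleton]
      simp [PhatInf, LambdaInf]
    · intro k hk
      simp only [Finset.mem_singleton] at hk
      show PhatInf P π 0 k * LambdaInf P π k j = 0
      simp [PhatInf, hk]
  · obtain ⟨m, rfl⟩ : ∃ m, i = m + 1 := ⟨i - 1, by omega⟩
    rw [lhs_compute P π hπ_stat m (hd m) j, rhs_fin P π m j]
    have hm : (m + 1) - 1 = m := by omega
    have hm2 : (m + 2) - 1 = m + 1 := by omega
    have hq : qScal P π (m+1) = ((P ^ m) 0 0 - (P ^ (m+1)) 0 0) / ((P ^ m) 0 0 - π 0) := by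
      simp [qScal, hm]
    have hP1 : PhatInf P π (m+1) 0 = π 0 * qScal P π (m+1) := by simp [PhatInf]
    have hP2 : PhatInf P π (m+1) 1 = (1 - π 0) * qScal P π (m+1) := by simp [PhatInf]
    have hP3 : PhatInf P π (m+1) (m+2) = 1 - qScal P π (m+1) := by
      simp [PhatInf]
    have hL0 : LambdaInf P π 0 j = if j = 0 then 1 else 0 := by simp [LambdaInf]
    rw [hP1, hP2, hP3, hq, hL0,
        lam_full P π 1 one_ne_zero (by simpa [hp0] using hd 0) j,
        lam_full P π (m+2) (by omega) (by rw [hm2]; exact hd (m+1)) j, hm2]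
    simp only [Nat.sub_self, pow_zero]
    have hdm := hd m
    have hdm1 := hd (m+1)
    by_cases hj : j = 0
    · subst hj
      simp only [if_pos rfl, Matrix.one_apply_eq, if_true]
      field_simp
      ring
    · have hj' : ¬((0 : Fin (n+1)) = j) := fun h => hj h.symm
      simp only [if_neg hj, Matrix.one_apply, if_neg hj', if_true]
      field_simp
      ring

lemma dual_supp : ∀ t k, t + 2 ≤ k → dualDist P π t k = 0 := by
  intro t
  induction t with
  | zero =>
    intro k hk
    have h0 : k ≠ 0 := by omega
    have h1 : k ≠ 1 := by omega
    simp [dualDist, pihat0, h0, h1]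
  | succ t ih =>
    intro k hk
    show (∑' i : ℕ, dualDist P π t i * PhatInf P π i k) = 0
    have hz : ∀ i : ℕ, dualDist P π t i * PhatInf P π i k = 0 := by
      intro i
      by_cases hi : t + 2 ≤ i
      · rw [ih i hi, zero_mul]
      · rw [phat_supp P π i k (by omega), mul_zero]
    simp only [hz]
    exact tsum_zero

lemma dual_fin (t k : ℕ) :
    dualDist P π (t+1) k = ∑ i ∈ Finset.range (t+2), dualDist P π t i * PhatInf P π i k := by
  show (∑' i : ℕ, dualDist P π t i * PhatInf P π i k) = _
  apply tsum_eq_sum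
  intro i hi
  rw [dual_supp P π t i (by simpa [Nat.lt_iff_add_one_le] using Finset.mem_range.not.mp hi |> fun h => by omega), zero_mul]

lemma main_evolve (hπ_stat : π ᵥ* P = π) (hpos : ∀ t : ℕ, π 0 < (P ^ t) 0 0) :
    ∀ (t : ℕ) (j : Fin (n+1)),
      (π ᵥ* Matrix.updateRow P 0 (fun l => if l = 0 then 1 else 0) ^ t) j
        = ∑ k ∈ Finset.range (t+2), dualDist P π t k * LambdaInf P π k j := by
  have hd : ∀ t : ℕ, (P ^ t) 0 0 - π 0 ≠ 0 := fun t => sub_ne_zero_of_ne (ne_of_gt (hpos t))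
  have hp0 : (P ^ 0) 0 0 = 1 := by simp [Matrix.one_apply]
  have h1π : (1:ℝ) - π 0 ≠ 0 := by have := hd 0; rwa [hp0] at this
  intro t
  induction t with
  | zero =>
    intro j
    have hl : (π ᵥ* Matrix.updateRow P 0 (fun l => if l = 0 then 1 else 0) ^ 0) j = π j := by
      simp [Matrix.vecMul_one]
    rw [hl]
    rw [show (0:ℕ)+2 = 2 from rfl, Finset.sum_range_succ, Finset.sum_range_succ,
        Finset.sum_range_zero]
    have hdd : dualDist P π 0 = pihat0 π := rfl
    rw [hdd]
    have hL0 : LambdaInf P π 0 j = if j = 0 then 1 else 0 := by simp [LambdaInf]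
    rw [hL0, lam_full P π 1 one_ne_zero (by simpa [hp0] using hd 0) j]
    simp only [pihat0, if_pos rfl, Nat.sub_self, pow_zero, Matrix.one_apply]
    by_cases hj : j = 0
    · subst hj
      simp only [if_pos rfl, Matrix.one_apply_eq, if_true, Nat.one_ne_zero, if_false]
      field_simp
      ring
    · have hj' : ¬((0 : Fin (n+1)) = j) := fun h => hj h.symm
      simp only [if_neg hj, if_neg hj', if_true, Nat.one_ne_zero, if_false]
      field_simp
      ring
  | succ t ih =>
    intro j
    have h1 : (π ᵥ* Matrix.updateRow P 0 (fun l => if l = 0 then 1 else 0) ^ (t+1)) j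
        = ∑ m', (π ᵥ* Matrix.updateRow P 0 (fun l => if l = 0 then 1 else 0) ^ t) m'
            * Matrix.updateRow P 0 (fun l => if l = 0 then 1 else 0) m' j := by
      rw [pow_succ, ← Matrix.vecMul_vecMul]
      simp [Matrix.vecMul, dotProduct]
    rw [h1]
    simp only [ih]
    calc ∑ m', (∑ k ∈ Finset.range (t+2), dualDist P π t k * LambdaInf P π k m')
            * Matrix.updateRow P 0 (fun l => if l = 0 then 1 else 0) m' j
        = ∑ k ∈ Finset.range (t+2), dualDist P π t k *
            ∑ m', LambdaInf P π k m' *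
              Matrix.updateRow P 0 (fun l => if l = 0 then 1 else 0) m' j := by
          simp_rw [Finset.sum_mul]
          rw [Finset.sum_comm]
          simp_rw [Finset.mul_sum, mul_assoc]
      _ = ∑ k ∈ Finset.range (t+2), dualDist P π t k *
            ∑ l ∈ Finset.range (t+3), PhatInf P π k l * LambdaInf P π l j := by
          apply Finset.sum_congr rfl
          intro k hk
          rw [intertwine P π hπ_stat hpos k j]
          congr 1
          apply tsum_eq_sum
          intro l hl
          have hkl : k + 2 ≤ l := by
            have := Finset.mem_range.mp hk
            have := Finset.mem_range.not.mp hl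
            omega
          rw [phat_supp P π k l hkl, zero_mul]
      _ = ∑ l ∈ Finset.range (t+3), dualDist P π (t+1) l * LambdaInf P π l j := by
          simp_rw [Finset.mul_sum]
          rw [Finset.sum_comm]
          apply Finset.sum_congr rfl
          intro l _
          rw [dual_fin P π t l, Finset.sum_mul]
          apply Finset.sum_congr rfl
          intro k _
          ring

end

/-- under `P^t(0,0) > π(0)` for all `t` and `P^t(0,0)` nonincreasing, the
matrix `Λ` is a quasi-link: its rows sum to 1, `π = π̂₀ Λ`, `Λ P_abs = P̂ Λ`, and the 0th
column of `Λ` is `δ_0ᵀ`; consequently the hitting time of state 0 for the chain `P`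
started in stationarity has the same distribution as the hitting time of state 0 of the
dual chain `(π̂₀, P̂)`. -/
theorem stmt17 {n : ℕ} (hn : 1 ≤ n)
    (P : Matrix (Fin (n + 1)) (Fin (n + 1)) ℝ)
    (hP_nonneg : ∀ i j, 0 ≤ P i j) (hP_row : ∀ i, ∑ j, P i j = 1)
    (hprim : ∃ t : ℕ, ∀ i j, 0 < (P ^ t) i j)
    (π : Fin (n + 1) → ℝ) (hπ_nonneg : ∀ i, 0 ≤ π i) (hπ_sum : ∑ i, π i = 1)
    (hπ_stat : π ᵥ* P = π)
    (hpos : ∀ t : ℕ, π 0 < (P ^ t) 0 0)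
    (hmono : ∀ t : ℕ, (P ^ (t + 1)) 0 0 ≤ (P ^ t) 0 0) :
    (∀ i : ℕ, ∑ j, LambdaInf P π i j = 1) ∧
    (∀ j : Fin (n + 1), π j = ∑' i : ℕ, pihat0 π i * LambdaInf P π i j) ∧
    (∀ (i : ℕ) (j : Fin (n + 1)),
      (∑ k, LambdaInf P π i k * Matrix.updateRow P 0 (fun l => if l = 0 then 1 else 0) k j)
        = ∑' k : ℕ, PhatInf P π i k * LambdaInf P π k j) ∧
    (LambdaInf P π 0 0 = 1 ∧ ∀ i : ℕ, 1 ≤ i → LambdaInf P π i 0 = 0) ∧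
    (∀ t : ℕ,
      ((π ᵥ* Matrix.updateRow P 0 (fun l => if l = 0 then 1 else 0) ^ t) 0)
        = dualDist P π t 0) := by
  have hd : ∀ t : ℕ, (P ^ t) 0 0 - π 0 ≠ 0 := fun t => sub_ne_zero_of_ne (ne_of_gt (hpos t))
  refine ⟨?_, ?_, ?_, ⟨by simp [LambdaInf], fun i hi => lam_zero_col P π i hi⟩, ?_⟩
  · -- row sums
    intro i
    rcases Nat.eq_zero_or_pos i with hi | hi
    · subst hi; simp [LambdaInf]
    · have hi' : i ≠ 0 := by omega
      rw [Finset.sum_congr rfl (fun j _ => lam_full P π i hi' (hd (i-1)) j)]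
      rw [← Finset.sum_div, Finset.sum_sub_distrib, ← Finset.mul_sum, ← Finset.mul_sum]
      rw [hπ_sum, pow_row_sum P hP_row (i-1) 0]
      rw [mul_one, mul_one]
      exact div_self (hd (i-1))
  · -- π = π̂₀ Λ
    intro j
    have h := tsum_eq_sum (L := SummationFilter.unconditional ℕ) (s := Finset.range 2)
      (f := fun i => pihat0 π i * LambdaInf P π i j) ?_
    · rw [h]
      have h2 := main_evolve P π hπ_stat hpos 0 j
      simp only [pow_zero, Matrix.vecMul_one,
        show dualDist P π 0 = pihat0 π from rfl] at h2
      exact h2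
    · intro i hi
      have hi2 : i ≠ 0 ∧ i ≠ 1 := by
        constructor <;> (intro h'; subst h'; simp at hi)
      simp [pihat0, hi2.1, hi2.2]
  · exact fun i j => intertwine P π hπ_stat hpos i j
  · -- hitting time
    intro t
    rw [main_evolve P π hπ_stat hpos t 0]
    rw [Finset.sum_eq_single 0]
    · simp [LambdaInf]
    · intro k _ hk
      rw [lam_zero_col P π k (by omega), mul_zero]
    · simp
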